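/- Let f be a continuous 2π-periodic function which is C^{1+α} for some α ∈ (0,1], i.e. f is C¹ and f' is α-Hölder continuous, and let ρ be its limit covariance function. Then there exists a finite constant C such that for all t, |ρ''(t) − ρ''(0)| ≤ C |t|^α. -/

import Mathlib

open MeasureTheory Filter Set

noncomputable section

/-- Convolution `(g∗h)(x) := (1/2π)∫₀^{2π} g(u)h(x−u) du`. -/
def conv (g h : ℝ → ℝ) (x : ℝ) : ℝ :=
  (1 / (2 * Real.pi)) * ∫ u in (0:ℝ)..(2 * Real.pi), g u * h (x - u)

/-- `f̌(x) := f(−x)`. -/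
def checkFn (f : ℝ → ℝ) : ℝ → ℝ := fun x => f (-x)

/-- Limit covariance function: `ρ(u) := (1/u)∫₀^u (f∗f̌)(x) dx` for `u ≠ 0`,
`ρ(0) := (1/2π)∫₀^{2π} f(t)² dt`. -/
def rho (f : ℝ → ℝ) (u : ℝ) : ℝ :=
  if u = 0 then (1 / (2 * Real.pi)) * ∫ t in (0:ℝ)..(2 * Real.pi), (f t) ^ 2
  else (1 / u) * ∫ x in (0:ℝ)..u, conv f (checkFn f) x

/-- Differentiation under the interval integral sign, for jointly continuous data with a
uniformly bounded derivative. -/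
private lemma param_deriv {F F' : ℝ → ℝ → ℝ} {a b M : ℝ} (x₀ : ℝ)
    (hF : Continuous fun p : ℝ × ℝ => F p.1 p.2)
    (hF' : Continuous fun p : ℝ × ℝ => F' p.1 p.2)
    (hd : ∀ x t, HasDerivAt (fun y => F y t) (F' x t) x)
    (hb : ∀ x t, t ∈ Set.uIoc a b → |F' x t| ≤ M) :
    HasDerivAt (fun x => ∫ t in a..b, F x t) (∫ t in a..b, F' x₀ t) x₀ := by
  have key := intervalIntegral.hasDerivAt_integral_of_dominated_loc_of_deriv_le
    (F := F) (F' := F') (x₀ := x₀) (a := a) (b := b) (bound := fun _ => M)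
    (μ := volume) (s := Metric.ball x₀ 1) (Metric.ball_mem_nhds x₀ one_pos)
    (Filter.Eventually.of_forall fun x =>
      ((hF.comp ((continuous_const (y := x)).prodMk continuous_id)).aestronglyMeasurable))
    ((hF.comp ((continuous_const (y := x₀)).prodMk continuous_id)).intervalIntegrable a b)
    ((hF'.comp ((continuous_const (y := x₀)).prodMk continuous_id)).aestronglyMeasurable)
    (Filter.Eventually.of_forall fun t ht x _ => by
      rw [Real.norm_eq_abs]; exact hb x t ht)
    intervalIntegrable_const
    (Filter.Eventually.of_forall fun t _ x _ => hd x t)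
  exact key.2

theorem statement8 (f : ℝ → ℝ) (hcont : Continuous f)
    (hper : Function.Periodic f (2 * Real.pi))
    (α : ℝ) (hα : α ∈ Set.Ioc (0:ℝ) 1)
    (hC1 : ContDiff ℝ 1 f)
    (hHolder : ∃ C : ℝ, ∀ s t : ℝ, |deriv f t - deriv f s| ≤ C * |t - s| ^ α) :
    ∃ C : ℝ, ∀ t : ℝ,
      |deriv (deriv (rho f)) t - deriv (deriv (rho f)) 0| ≤ C * |t| ^ α := by
  obtain ⟨hα0, hα1⟩ := hα
  obtain ⟨C, hC⟩ := hHolder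
  set f' := deriv f with hf'def
  have hf'c : Continuous f' := hC1.continuous_deriv le_rfl
  have hdf : ∀ x, HasDerivAt f (f' x) x :=
    fun x => ((hC1.differentiable one_ne_zero) x).hasDerivAt
  have hper' : Function.Periodic f' (2 * Real.pi) := by
    intro x
    have hfe : f = fun y => f (y + 2 * Real.pi) := funext fun y => (hper y).symm
    simp only [hf'def]
    conv_rhs => rw [hfe]
    rw [deriv_comp_add_const]
  -- boundedness of `f` and `f'`
  have hbdd : ∀ h : ℝ → ℝ, Continuous h → Function.Periodic h (2 * Real.pi) →
      ∃ M, ∀ x, |h x| ≤ M := by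
    intro h hc hp
    obtain ⟨r, hr⟩ := (Metric.isBounded_iff_subset_closedBall 0).1
      (hp.isBounded_of_continuous Real.two_pi_pos.ne' hc)
    exact ⟨r, fun x => by simpa [Real.dist_eq] using hr (mem_range_self x)⟩
  obtain ⟨M, hM1, hM2⟩ : ∃ M, (∀ x, |f x| ≤ M) ∧ ∀ x, |f' x| ≤ M := by
    obtain ⟨M1, h1⟩ := hbdd f hcont hper
    obtain ⟨M2, h2⟩ := hbdd f' hf'c hper'
    exact ⟨max M1 M2, fun x => (h1 x).trans (le_max_left _ _),
      fun x => (h2 x).trans (le_max_right _ _)⟩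
  have hMnn : 0 ≤ M := (abs_nonneg _).trans (hM1 0)
  have hCnn : 0 ≤ C := by
    have := hC 0 1
    simp only [sub_zero, abs_one, Real.one_rpow, mul_one] at this
    exact (abs_nonneg _).trans this
  set cc : ℝ := 1 / (2 * Real.pi) with hccdef
  have hccpos : 0 < cc := by positivity
  set g : ℝ → ℝ := conv f (checkFn f) with hgdefn
  have hgdef : ∀ x, g x = cc * ∫ u in (0:ℝ)..(2 * Real.pi), f u * f (u - x) := by
    intro x
    simp only [hgdefn, conv, checkFn, neg_sub, hccdef]
  set g1 : ℝ → ℝ := fun x => -(cc * ∫ v in (0:ℝ)..(2 * Real.pi), f (v + x) * f' v)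
    with hg1def
  set g2 : ℝ → ℝ := fun x => -(cc * ∫ v in (0:ℝ)..(2 * Real.pi), f' (v + x) * f' v)
    with hg2def
  -- the shift identity coming from periodicity
  have hshift : ∀ x, (∫ u in (0:ℝ)..(2 * Real.pi), f u * f' (u - x))
      = ∫ v in (0:ℝ)..(2 * Real.pi), f (v + x) * f' v := by
    intro x
    set φ : ℝ → ℝ := fun v => f (v + x) * f' v with hφ
    have hφp : Function.Periodic φ (2 * Real.pi) := by
      intro v
      simp only [hφ]
      rw [add_right_comm, hper (v + x), hper' v]
    have h1 : (fun u : ℝ => f u * f' (u - x)) = fun u => φ (u - x) :=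
      funext fun u => by simp only [hφ, sub_add_cancel]
    rw [h1, intervalIntegral.integral_comp_sub_right φ x]
    have := hφp.intervalIntegral_add_eq (-x) 0
    simpa [zero_sub, sub_eq_neg_add] using this
  -- first derivative of the convolution
  have hgD : ∀ x, HasDerivAt g (g1 x) x := by
    intro x
    have hA : HasDerivAt (fun x => ∫ u in (0:ℝ)..(2 * Real.pi), f u * f (u - x))
        (∫ u in (0:ℝ)..(2 * Real.pi), -(f u * f' (u - x))) x := by
      apply param_deriv (F := fun x u => f u * f (u - x))
        (F' := fun x u => -(f u * f' (u - x))) (M := M * M)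
      · exact (hcont.comp continuous_snd).mul (hcont.comp (continuous_snd.sub continuous_fst))
      · exact ((hcont.comp continuous_snd).mul
          (hf'c.comp (continuous_snd.sub continuous_fst))).neg
      · intro x u
        have h1 : HasDerivAt (fun y : ℝ => f (u - y)) (f' (u - x) * (-1)) x :=
          (hdf (u - x)).comp x ((hasDerivAt_id x).const_sub u)
        have := h1.const_mul (f u)
        refine this.congr_deriv ?_
        ring
      · intro x u _
        rw [abs_neg, abs_mul]
        exact mul_le_mul (hM1 u) (hM2 _) (abs_nonneg _) hMnn
    have hg : g = fun x => cc * ∫ u in (0:ℝ)..(2 * Real.pi), f u * f (u - x) :=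
      funext hgdef
    rw [hg, hg1def]
    have := hA.const_mul cc
    refine this.congr_deriv ?_
    simp only [intervalIntegral.integral_neg, mul_neg, hshift x]
  -- second derivative of the convolution
  have hg1D : ∀ x, HasDerivAt g1 (g2 x) x := by
    intro x
    have hB : HasDerivAt (fun x => ∫ v in (0:ℝ)..(2 * Real.pi), f (v + x) * f' v)
        (∫ v in (0:ℝ)..(2 * Real.pi), f' (v + x) * f' v) x := by
      apply param_deriv (F := fun x v => f (v + x) * f' v)
        (F' := fun x v => f' (v + x) * f' v) (M := M * M)
      · exact (hcont.comp (continuous_snd.add continuous_fst)).mul (hf'c.comp continuous_snd)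
      · exact (hf'c.comp (continuous_snd.add continuous_fst)).mul (hf'c.comp continuous_snd)
      · intro x v
        have h1 : HasDerivAt (fun y : ℝ => f (v + y)) (f' (v + x) * 1) x :=
          (hdf (v + x)).comp x ((hasDerivAt_id x).const_add v)
        have := h1.mul_const (f' v)
        refine this.congr_deriv ?_
        ring
      · intro x v _
        rw [abs_mul]
        exact mul_le_mul (hM2 _) (hM2 _) (abs_nonneg _) hMnn
    rw [hg1def, hg2def]
    exact (hB.const_mul cc).neg
  have hInt2 : ∀ z : ℝ, IntervalIntegrable (fun v => f' (v + z) * f' v) volume 0 (2 * Real.pi) :=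
    fun z => ((hf'c.comp (continuous_id.add continuous_const)).mul hf'c).intervalIntegrable _ _
  -- Hölder estimate for g2
  have hg2H : ∀ x y, |g2 x - g2 y| ≤ C * M * |x - y| ^ α := by
    intro x y
    have hpt : ∀ v ∈ Set.uIoc (0:ℝ) (2 * Real.pi),
        ‖f' (v + y) * f' v - f' (v + x) * f' v‖ ≤ C * |x - y| ^ α * M := by
      intro v _
      rw [Real.norm_eq_abs, ← sub_mul, abs_mul]
      refine mul_le_mul ?_ (hM2 v) (abs_nonneg _) (by positivity)
      have h2 := hC (v + x) (v + y)
      rw [add_sub_add_left_eq_sub] at h2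
      rw [abs_sub_comm x y]
      exact h2
    have h := intervalIntegral.norm_integral_le_of_norm_le_const hpt
    have heq : g2 x - g2 y
        = cc * ∫ v in (0:ℝ)..(2 * Real.pi), (f' (v + y) * f' v - f' (v + x) * f' v) := by
      rw [intervalIntegral.integral_sub (hInt2 y) (hInt2 x)]
      simp only [hg2def]
      ring
    calc |g2 x - g2 y| = cc * ‖∫ v in (0:ℝ)..(2 * Real.pi),
          (f' (v + y) * f' v - f' (v + x) * f' v)‖ := by
          rw [heq, abs_mul, abs_of_pos hccpos, Real.norm_eq_abs]
      _ ≤ cc * (C * |x - y| ^ α * M * |2 * Real.pi - 0|) :=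
          mul_le_mul_of_nonneg_left h hccpos.le
      _ = C * M * |x - y| ^ α := by
          rw [sub_zero, abs_of_pos Real.two_pi_pos, hccdef]
          field_simp
  -- continuity of g2 from the Hölder estimate
  have hg2c : Continuous g2 := by
    rw [continuous_iff_continuousAt]
    intro x
    rw [ContinuousAt, tendsto_iff_dist_tendsto_zero]
    apply squeeze_zero (fun y => dist_nonneg)
      (g := fun y => C * M * |y - x| ^ α)
      (fun y => by rw [Real.dist_eq]; exact hg2H y x)
    have h1 : Tendsto (fun y : ℝ => |y - x|) (nhds x) (nhds 0) := by
      have : Tendsto (fun y : ℝ => y - x) (nhds x) (nhds (x - x)) :=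
        (continuous_id.sub continuous_const).tendsto x
      rw [sub_self] at this
      simpa using this.abs
    have h2 : Tendsto (fun z : ℝ => C * M * z ^ α) (nhds 0) (nhds 0) := by
      have h3 := (Real.continuousAt_rpow_const 0 α (Or.inr hα0.le)).tendsto
      rw [Real.zero_rpow hα0.ne'] at h3
      simpa using h3.const_mul (C * M)
    exact h2.comp h1
  have hgc : Continuous g := continuous_iff_continuousAt.2 fun x => (hgD x).continuousAt
  have hg1c : Continuous g1 := continuous_iff_continuousAt.2 fun x => (hg1D x).continuousAt
  -- bounds for g1 and g2
  have hg1b : ∀ x, |g1 x| ≤ M * M := by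
    intro x
    have hpt : ∀ v ∈ Set.uIoc (0:ℝ) (2 * Real.pi), ‖f (v + x) * f' v‖ ≤ M * M := by
      intro v _
      rw [Real.norm_eq_abs, abs_mul]
      exact mul_le_mul (hM1 _) (hM2 _) (abs_nonneg _) hMnn
    have h := intervalIntegral.norm_integral_le_of_norm_le_const hpt
    calc |g1 x| = cc * ‖∫ v in (0:ℝ)..(2 * Real.pi), f (v + x) * f' v‖ := by
          rw [hg1def]; rw [abs_neg, abs_mul, abs_of_pos hccpos, Real.norm_eq_abs]
      _ ≤ cc * (M * M * |2 * Real.pi - 0|) := mul_le_mul_of_nonneg_left h hccpos.le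
      _ = M * M := by
          rw [sub_zero, abs_of_pos Real.two_pi_pos, hccdef]
          field_simp
  have hg2b : ∀ x, |g2 x| ≤ M * M := by
    intro x
    have hpt : ∀ v ∈ Set.uIoc (0:ℝ) (2 * Real.pi), ‖f' (v + x) * f' v‖ ≤ M * M := by
      intro v _
      rw [Real.norm_eq_abs, abs_mul]
      exact mul_le_mul (hM2 _) (hM2 _) (abs_nonneg _) hMnn
    have h := intervalIntegral.norm_integral_le_of_norm_le_const hpt
    calc |g2 x| = cc * ‖∫ v in (0:ℝ)..(2 * Real.pi), f' (v + x) * f' v‖ := by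
          rw [hg2def]; rw [abs_neg, abs_mul, abs_of_pos hccpos, Real.norm_eq_abs]
      _ ≤ cc * (M * M * |2 * Real.pi - 0|) := mul_le_mul_of_nonneg_left h hccpos.le
      _ = M * M := by
          rw [sub_zero, abs_of_pos Real.two_pi_pos, hccdef]
          field_simp
  -- rho is the average of g over [0, u]
  have hrho_eq : rho f = fun u => ∫ s in (0:ℝ)..1, g (s * u) := by
    funext u
    by_cases hu : u = 0
    · subst hu
      simp only [mul_zero, intervalIntegral.integral_const, smul_eq_mul, sub_zero, one_mul]
      rw [rho, if_pos rfl, hgdef 0]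
      simp only [sub_zero, hccdef]
      congr 1
      exact intervalIntegral.integral_congr fun t _ => (sq (f t))
    · rw [rho, if_neg hu, intervalIntegral.integral_comp_mul_right g hu]
      simp only [zero_mul, one_mul, smul_eq_mul, one_div, hgdefn]
  set r1 : ℝ → ℝ := fun u => ∫ s in (0:ℝ)..1, s * g1 (s * u) with hr1def
  set r2 : ℝ → ℝ := fun u => ∫ s in (0:ℝ)..1, s * (s * g2 (s * u)) with hr2def
  -- first derivative of rho
  have hrhoD : ∀ u, HasDerivAt (rho f) (r1 u) u := by
    intro u
    rw [hrho_eq]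
    simp only [hr1def]
    apply param_deriv (F := fun u s => g (s * u)) (F' := fun u s => s * g1 (s * u))
      (M := M * M)
    · exact hgc.comp (continuous_snd.mul continuous_fst)
    · exact continuous_snd.mul (hg1c.comp (continuous_snd.mul continuous_fst))
    · intro x s
      have h := (hgD (s * x)).comp x ((hasDerivAt_id x).const_mul s)
      refine h.congr_deriv ?_
      ring
    · intro x s hs
      rw [Set.uIoc_of_le zero_le_one] at hs
      rw [abs_mul]
      have hs1 : |s| ≤ 1 := by rw [abs_of_pos hs.1]; exact hs.2
      calc |s| * |g1 (s * x)| ≤ 1 * (M * M) :=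
            mul_le_mul hs1 (hg1b _) (abs_nonneg _) zero_le_one
        _ = M * M := one_mul _
  -- second derivative of rho
  have hr1D : ∀ u, HasDerivAt r1 (r2 u) u := by
    intro u
    simp only [hr1def, hr2def]
    apply param_deriv (F := fun u s => s * g1 (s * u))
      (F' := fun u s => s * (s * g2 (s * u))) (M := M * M)
    · exact continuous_snd.mul (hg1c.comp (continuous_snd.mul continuous_fst))
    · exact continuous_snd.mul (continuous_snd.mul
        (hg2c.comp (continuous_snd.mul continuous_fst)))
    · intro x s
      have h := ((hg1D (s * x)).comp x ((hasDerivAt_id x).const_mul s)).const_mul s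
      refine h.congr_deriv ?_
      ring
    · intro x s hs
      rw [Set.uIoc_of_le zero_le_one] at hs
      have hs1 : |s| ≤ 1 := by rw [abs_of_pos hs.1]; exact hs.2
      rw [abs_mul, abs_mul]
      calc |s| * (|s| * |g2 (s * x)|) ≤ 1 * (1 * (M * M)) := by
            refine mul_le_mul hs1 (mul_le_mul hs1 (hg2b _) (abs_nonneg _) zero_le_one) ?_
              zero_le_one
            positivity
        _ = M * M := by ring
  have hdd : deriv (deriv (rho f)) = r2 := by
    have h1 : deriv (rho f) = r1 := funext fun u => (hrhoD u).deriv
    rw [h1]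
    exact funext fun u => (hr1D u).deriv
  refine ⟨C * M, fun t => ?_⟩
  rw [hdd]
  simp only [hr2def]
  -- final estimate
  have hCMnn : 0 ≤ C * M := mul_nonneg hCnn hMnn
  have hIg : ∀ u : ℝ, IntervalIntegrable (fun s => s * (s * g2 (s * u))) volume 0 1 :=
    fun u => (continuous_id.mul (continuous_id.mul
      (hg2c.comp (continuous_id.mul continuous_const)))).intervalIntegrable _ _
  rw [← intervalIntegral.integral_sub (hIg t) (hIg 0)]
  have hpt : ∀ s ∈ Set.uIoc (0:ℝ) 1,
      ‖s * (s * g2 (s * t)) - s * (s * g2 (s * 0))‖ ≤ C * M * |t| ^ α := by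
    intro s hs
    rw [Set.uIoc_of_le zero_le_one] at hs
    have hs1 : |s| ≤ 1 := by rw [abs_of_pos hs.1]; exact hs.2
    have key : |g2 (s * t) - g2 (s * 0)| ≤ C * M * |t| ^ α := by
      refine (hg2H (s * t) (s * 0)).trans ?_
      have h1 : |s * t - s * 0| ≤ |t| := by
        rw [mul_zero, sub_zero, abs_mul]
        calc |s| * |t| ≤ 1 * |t| := mul_le_mul_of_nonneg_right hs1 (abs_nonneg _)
          _ = |t| := one_mul _
      exact mul_le_mul_of_nonneg_left
        (Real.rpow_le_rpow (abs_nonneg _) h1 hα0.le) hCMnn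
    have heq : s * (s * g2 (s * t)) - s * (s * g2 (s * 0))
        = s * (s * (g2 (s * t) - g2 (s * 0))) := by ring
    rw [Real.norm_eq_abs, heq, abs_mul, abs_mul]
    calc |s| * (|s| * |g2 (s * t) - g2 (s * 0)|) ≤ 1 * (1 * (C * M * |t| ^ α)) := by
          refine mul_le_mul hs1 (mul_le_mul hs1 key (abs_nonneg _) zero_le_one) ?_ zero_le_one
          positivity
      _ = C * M * |t| ^ α := by ring
  have h := intervalIntegral.norm_integral_le_of_norm_le_const hpt
  simpa using h

end
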